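/- In the standing setup, let 𝐡 be the lift of h with 𝐡^0 = id and write x^t = 𝐡^t(x). Then for every ε > 0 there exists δ ∈ ℝ such that for every x ∈ exp⁻¹(Bd(X) \ {0}): if Re(x^{t₀}) ≤ δ for some t₀ ∈ [0,1], then Re(x^t) < ε for all t ∈ [0,1]. Equivalently, if Re(x^{t₀}) ≥ ε for some t₀, then Re(x^t) > δ for all t ∈ [0,1]. -/

import Mathlib

open Set Metric Topology Filter

/-- The lift `exp⁻¹(Bd(X) \ {0})` of the punctured boundary of `X`. -/
def bdLift (X : Set ℂ) : Set ℂ := Complex.exp ⁻¹' (frontier X \ {0})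

/-- uniform control of the real part along the lifted isotopy:
for every ε > 0 there is δ such that if for some time the lifted orbit of `x` has
real part ≤ δ, then its real part stays < ε for all times; equivalently, if at some
time the real part is ≥ ε, then it stays > δ for all times. -/
theorem lift_real_part_control
    (X : Set ℂ) (hXne : X.Nonempty) (hXcpt : IsCompact X) (hXconn : IsConnected X)
    (hXns : IsConnected Xᶜ) (h0 : (0:ℂ) ∈ frontier X) (hXb : X ⊆ Metric.ball 0 1)
    (h : ℂ → ℝ → ℂ)
    (hcont : ContinuousOn (fun p : ℂ × ℝ => h p.1 p.2) (frontier X ×ˢ Set.Icc 0 1))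
    (hinj : ∀ t ∈ Set.Icc (0:ℝ) 1, Set.InjOn (fun z => h z t) (frontier X))
    (hid : ∀ z ∈ frontier X, h z 0 = z)
    (hfix : ∀ t ∈ Set.Icc (0:ℝ) 1, h 0 t = 0)
    -- 𝐡 = H, the lift of h with 𝐡⁰ = id :
    (H : ℂ → ℝ → ℂ)
    (hHcont : ContinuousOn (fun p : ℂ × ℝ => H p.1 p.2) (bdLift X ×ˢ Set.Icc 0 1))
    (hHinj : ∀ t ∈ Set.Icc (0:ℝ) 1, Set.InjOn (fun z => H z t) (bdLift X))
    (hH0 : ∀ z ∈ bdLift X, H z 0 = z)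
    (hHlift : ∀ z ∈ bdLift X, ∀ t ∈ Set.Icc (0:ℝ) 1,
      Complex.exp (H z t) = h (Complex.exp z) t) :
    ∀ ε > (0:ℝ), ∃ δ : ℝ, ∀ x ∈ bdLift X,
      ((∃ t₀ ∈ Set.Icc (0:ℝ) 1, (H x t₀).re ≤ δ) →
        ∀ t ∈ Set.Icc (0:ℝ) 1, (H x t).re < ε) ∧
      ((∃ t₀ ∈ Set.Icc (0:ℝ) 1, ε ≤ (H x t₀).re) →
        ∀ t ∈ Set.Icc (0:ℝ) 1, δ < (H x t).re) := by
  intro ε hε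
  -- key norm identity
  have habs : ∀ x ∈ bdLift X, ∀ t ∈ Set.Icc (0:ℝ) 1,
      ‖h (Complex.exp x) t‖ = Real.exp ((H x t).re) := by
    intro x hx t ht
    rw [← hHlift x hx t ht, Complex.norm_exp]
  have hKmem : ∀ x ∈ bdLift X, Complex.exp x ∈ frontier X := fun x hx => hx.1
  -- the "bad" compact set
  set T : Set (ℂ × ℝ × ℝ) := frontier X ×ˢ (Set.Icc 0 1 ×ˢ Set.Icc 0 1) with hT
  have hKc : IsCompact (frontier X) :=
    hXcpt.of_isClosed_subset isClosed_frontier hXcpt.isClosed.frontier_subset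
  have hTc : IsCompact T := hKc.prod (isCompact_Icc.prod isCompact_Icc)
  have hmapst : Set.MapsTo (fun p : ℂ × ℝ × ℝ => (p.1, p.2.2)) T (frontier X ×ˢ Set.Icc 0 1) :=
    fun p hp => ⟨hp.1, hp.2.2⟩
  have hmapss : Set.MapsTo (fun p : ℂ × ℝ × ℝ => (p.1, p.2.1)) T (frontier X ×ˢ Set.Icc 0 1) :=
    fun p hp => ⟨hp.1, hp.2.1⟩
  have hgt : ContinuousOn (fun p : ℂ × ℝ × ℝ => ‖h p.1 p.2.2‖) T := by
    apply continuous_norm.comp_continuousOn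
    exact hcont.comp (continuous_fst.prodMk (continuous_snd.snd)).continuousOn hmapst
  have hgs : ContinuousOn (fun p : ℂ × ℝ × ℝ => ‖h p.1 p.2.1‖) T := by
    apply continuous_norm.comp_continuousOn
    exact hcont.comp (continuous_fst.prodMk (continuous_snd.fst)).continuousOn hmapss
  set S : Set (ℂ × ℝ × ℝ) :=
    T ∩ (fun p : ℂ × ℝ × ℝ => ‖h p.1 p.2.2‖) ⁻¹' Set.Ici (Real.exp ε) with hS
  have hSclosed : IsClosed S :=
    hgt.preimage_isClosed_of_isClosed (hTc.isClosed)
      (isClosed_Ici)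
  have hScpt : IsCompact S := hTc.of_isClosed_subset hSclosed Set.inter_subset_left
  by_cases hSne : S.Nonempty
  · obtain ⟨p₀, hp₀, hmin⟩ := hScpt.exists_isMinOn hSne (hgs.mono Set.inter_subset_left)
    set m : ℝ := ‖h p₀.1 p₀.2.1‖ with hm
    have hmpos : 0 < m := by
      rw [hm, norm_pos_iff]
      intro hzero
      have h1 : p₀.1 = 0 := by
        apply hinj p₀.2.1 hp₀.1.2.1 hp₀.1.1 h0
        simp only [hzero, hfix p₀.2.1 hp₀.1.2.1]
      have h2 : ‖h p₀.1 p₀.2.2‖ = 0 := by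
        rw [h1, hfix p₀.2.2 hp₀.1.2.2, norm_zero]
      have h3 : Real.exp ε ≤ 0 := h2 ▸ hp₀.2
      exact absurd h3 (not_le.2 (Real.exp_pos ε))
    refine ⟨Real.log (m / 2), ?_⟩
    have key : ∀ x ∈ bdLift X, ∀ s ∈ Set.Icc (0:ℝ) 1, (H x s).re ≤ Real.log (m / 2) →
        ∀ t ∈ Set.Icc (0:ℝ) 1, (H x t).re < ε := by
      intro x hx s hs hsle t ht
      by_contra hcon
      push_neg at hcon
      have hpS : (Complex.exp x, s, t) ∈ S := by
        refine ⟨⟨hKmem x hx, hs, ht⟩, ?_⟩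
        have := habs x hx t ht
        simp only [Set.mem_preimage, Set.mem_Ici, this]
        exact Real.exp_le_exp.2 hcon
      have h4 : m ≤ ‖h (Complex.exp x) s‖ := hmin hpS
      rw [habs x hx s hs] at h4
      have h5 : Real.exp ((H x s).re) ≤ m / 2 := by
        calc Real.exp ((H x s).re) ≤ Real.exp (Real.log (m / 2)) := Real.exp_le_exp.2 hsle
          _ = m / 2 := Real.exp_log (by linarith)
      linarith
    intro x hx
    constructor
    · rintro ⟨t₀, ht₀, hle⟩
      exact key x hx t₀ ht₀ hle
    · rintro ⟨t₀, ht₀, hge⟩ t ht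
      by_contra hcon
      push_neg at hcon
      have := key x hx t ht hcon t₀ ht₀
      linarith
  · -- S empty: real parts never reach ε
    refine ⟨0, ?_⟩
    have key : ∀ x ∈ bdLift X, ∀ t ∈ Set.Icc (0:ℝ) 1, (H x t).re < ε := by
      intro x hx t ht
      by_contra hcon
      push_neg at hcon
      apply hSne
      refine ⟨(Complex.exp x, t, t), ⟨⟨hKmem x hx, ht, ht⟩, ?_⟩⟩
      simp only [Set.mem_preimage, Set.mem_Ici, habs x hx t ht]
      exact Real.exp_le_exp.2 hcon
    intro x hx
    refine ⟨fun _ t ht => key x hx t ht, ?_⟩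
    rintro ⟨t₀, ht₀, hge⟩
    exact absurd (key x hx t₀ ht₀) (not_lt.2 hge)
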